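/- Let A be an associative unital ℚ-algebra with a central element t such that A is t-adically separated and t-adically complete, and let τ : A → A be a ring automorphism with τ(t) = t and τ(a) − a ∈ tA for all a ∈ A. Let N ≥ 1 and let P ∈ Mat_N(A) be an idempotent matrix (P·P = P), and let τ(P) ∈ Mat_N(A) be obtained by applying τ entrywise. Then Tr(τ(P)) − Tr(P) lies in the additive subgroup of A generated by the commutators {a·b − b·a : a, b ∈ A}. -/

import Mathlib

/-- An automorphism of a `t`-adically separated and complete ℚ-algebra which is trivial
modulo `t` does not change the trace of an idempotent matrix modulo commutators. -/
theorem trace_invariant_under_automorphism_trivial_mod_t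
    (A : Type*) [Ring A] [Algebra ℚ A] (t : A)
    (hcentral : ∀ a : A, t * a = a * t)
    (hsep : ∀ a : A, (∀ n : ℕ, ∃ b : A, a = t ^ n * b) → a = 0)
    (hcomplete : ∀ s : ℕ → A,
      (∀ n : ℕ, ∃ b : A, s (n + 1) - s n = t ^ n * b) →
      ∃ a : A, ∀ n : ℕ, ∃ b : A, a - s n = t ^ n * b)
    (τ : A ≃+* A) (hτt : τ t = t)
    (hτ : ∀ a : A, ∃ b : A, τ a - a = t * b)
    (N : ℕ) (hN : 1 ≤ N)
    (P : Matrix (Fin N) (Fin N) A) (hP : P * P = P) :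
    Matrix.trace (P.map τ) - Matrix.trace P ∈
      AddSubgroup.closure {x : A | ∃ a b : A, x = a * b - b * a} := by
  classical
  -- powers of t are central
  have hcn : ∀ (n : ℕ) (a : A), t ^ n * a = a * t ^ n := by
    intro n
    induction n with
    | zero => simp
    | succ n ih =>
      intro a
      rw [pow_succ, mul_assoc, hcentral, ← mul_assoc, ih, mul_assoc]
  -- entrywise divisibility predicate
  set Pn : ℕ → Matrix (Fin N) (Fin N) A → Prop :=
    fun n X => ∀ i j, ∃ b, X i j = t ^ n * b with hPn
  have Pn_sub : ∀ n X Y, Pn n X → Pn n Y → Pn n (X - Y) := by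
    intro n X Y hX hY i j
    obtain ⟨b, hb⟩ := hX i j; obtain ⟨c, hc⟩ := hY i j
    exact ⟨b - c, by simp [Matrix.sub_apply, hb, hc, mul_sub]⟩
  have Pn_mul_right : ∀ (n : ℕ) (X Y : Matrix (Fin N) (Fin N) A),
      Pn n X → Pn n (X * Y) := by
    intro n X Y hX i j
    choose B hB using hX
    refine ⟨∑ k, B i k * Y k j, ?_⟩
    rw [Matrix.mul_apply, Finset.mul_sum]
    exact Finset.sum_congr rfl fun k _ => by rw [hB, mul_assoc]
  have Pn_mul_left : ∀ (n : ℕ) (X Y : Matrix (Fin N) (Fin N) A),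
      Pn n Y → Pn n (X * Y) := by
    intro n X Y hY i j
    choose B hB using hY
    refine ⟨∑ k, X i k * B k j, ?_⟩
    rw [Matrix.mul_apply, Finset.mul_sum]
    refine Finset.sum_congr rfl fun k _ => ?_
    rw [hB, ← mul_assoc, ← hcn, mul_assoc]
  have Pn_mul : ∀ (m n : ℕ) (X Y : Matrix (Fin N) (Fin N) A),
      Pn m X → Pn n Y → Pn (m + n) (X * Y) := by
    intro m n X Y hX hY i j
    choose B hB using hX
    choose C hC using hY
    refine ⟨∑ k, B i k * C k j, ?_⟩
    rw [Matrix.mul_apply, Finset.mul_sum]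
    refine Finset.sum_congr rfl fun k _ => ?_
    rw [hB, hC, pow_add, mul_assoc, ← mul_assoc (B i k), ← hcn n (B i k),
      mul_assoc, ← mul_assoc]
  -- matrix-level separatedness
  have msep : ∀ X : Matrix (Fin N) (Fin N) A, (∀ n, Pn n X) → X = 0 := by
    intro X hX
    ext i j
    simpa using hsep (X i j) (fun n => hX n i j)
  -- matrix-level completeness
  have mcomp : ∀ s : ℕ → Matrix (Fin N) (Fin N) A,
      (∀ n, Pn n (s (n + 1) - s n)) → ∃ a, ∀ n, Pn n (a - s n) := by
    intro s hs
    have h' : ∀ i j, ∃ a : A, ∀ n, ∃ b, a - s n i j = t ^ n * b := by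
      intro i j
      apply hcomplete
      intro n
      obtain ⟨b, hb⟩ := hs n i j
      exact ⟨b, by simpa [Matrix.sub_apply] using hb⟩
    choose a ha using h'
    exact ⟨Matrix.of a, fun n i j => by simpa [Matrix.sub_apply] using ha i j n⟩
  -- the conjugating element
  set f : Matrix (Fin N) (Fin N) A := P.map τ with hfdef
  have hf : f * f = f := by
    have : f = P.map (τ : A →+* A) := rfl
    rw [this, ← Matrix.map_mul, hP]
  set u : Matrix (Fin N) (Fin N) A := f * P + (1 - f) * (1 - P) with hudef
  set v : Matrix (Fin N) (Fin N) A := 1 - u with hvdef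
  have hΔ : Pn 1 (f - P) := by
    intro i j
    obtain ⟨b, hb⟩ := hτ (P i j)
    exact ⟨b, by simpa [Matrix.sub_apply, hfdef, Matrix.map_apply] using hb⟩
  have hkey : (f - P) * P = f * P - P := by rw [sub_mul, hP]
  have hv1 : Pn 1 v := by
    have hid : v = ((f - P) - (f - P) * P) - (f - P) * P := by
      rw [hkey, hvdef, hudef]
      noncomm_ring
    rw [hid]
    exact Pn_sub _ _ _ (Pn_sub _ _ _ hΔ (Pn_mul_right _ _ _ hΔ)) (Pn_mul_right _ _ _ hΔ)
  have hvn : ∀ n, Pn n (v ^ n) := by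
    intro n
    induction n with
    | zero => intro i j; exact ⟨(1 : Matrix (Fin N) (Fin N) A) i j, by simp⟩
    | succ n ih => rw [pow_succ]; exact Pn_mul n 1 _ _ ih hv1
  -- construct the inverse of u
  obtain ⟨a, ha⟩ := mcomp (fun n => ∑ i ∈ Finset.range n, v ^ i) (by
    intro n
    have : (∑ i ∈ Finset.range (n + 1), v ^ i) - (∑ i ∈ Finset.range n, v ^ i) = v ^ n := by
      rw [Finset.sum_range_succ]; abel
    rw [this]
    exact hvn n)
  have huv : u = 1 - v := by rw [hvdef]; abel
  have hau : a * u = 1 := by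
    have h : ∀ n, Pn n (a * u - 1) := by
      intro n
      have hg : (∑ i ∈ Finset.range n, v ^ i) * u = 1 - v ^ n := by
        rw [huv]
        have h := geom_sum_mul v n
        calc (∑ i ∈ Finset.range n, v ^ i) * (1 - v)
            = -((∑ i ∈ Finset.range n, v ^ i) * (v - 1)) := by noncomm_ring
          _ = -(v ^ n - 1) := by rw [h]
          _ = 1 - v ^ n := by abel
      have h1 : a * u - 1 = (a - ∑ i ∈ Finset.range n, v ^ i) * u - v ^ n := by
        rw [sub_mul, hg]; abel
      rw [h1]
      exact Pn_sub _ _ _ (Pn_mul_right _ _ _ (ha n)) (hvn n)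
    exact sub_eq_zero.1 (msep _ h)
  have hua : u * a = 1 := by
    have h : ∀ n, Pn n (u * a - 1) := by
      intro n
      have hg : u * (∑ i ∈ Finset.range n, v ^ i) = 1 - v ^ n := by
        rw [huv]
        have h := mul_geom_sum v n
        calc (1 - v) * (∑ i ∈ Finset.range n, v ^ i)
            = -((v - 1) * ∑ i ∈ Finset.range n, v ^ i) := by noncomm_ring
          _ = -(v ^ n - 1) := by rw [h]
          _ = 1 - v ^ n := by abel
      have h1 : u * a - 1 = u * (a - ∑ i ∈ Finset.range n, v ^ i) - v ^ n := by
        rw [mul_sub, hg]; abel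
      rw [h1]
      exact Pn_sub _ _ _ (Pn_mul_left _ _ _ (ha n)) (hvn n)
    exact sub_eq_zero.1 (msep _ h)
  -- intertwining relation
  have hue : u * P = f * u := by
    have h1 : u * P = f * (P * P) + (1 - f) * ((1 - P) * P) := by
      rw [hudef]; noncomm_ring
    have h2 : (1 - P) * P = 0 := by rw [sub_mul, one_mul, hP, sub_self]
    have h3 : f * u = f * f * P + f * (1 - f) * (1 - P) := by
      rw [hudef]; noncomm_ring
    have h4 : f * (1 - f) = 0 := by rw [mul_sub, mul_one, hf, sub_self]
    rw [h1, h2, h3, h4, hf, hP]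
    simp
  have hfeq : f = u * (P * a) := by
    calc f = f * (u * a) := by rw [hua, mul_one]
      _ = (f * u) * a := by rw [mul_assoc]
      _ = (u * P) * a := by rw [hue]
      _ = u * (P * a) := by rw [mul_assoc]
  have hPeq : Matrix.trace P = Matrix.trace ((P * a) * u) := by
    rw [mul_assoc, hau, mul_one]
  -- trace of commutator lies in the commutator subgroup
  have trace_comm : ∀ X Y : Matrix (Fin N) (Fin N) A,
      Matrix.trace (X * Y) - Matrix.trace (Y * X) ∈
        AddSubgroup.closure {x : A | ∃ a b : A, x = a * b - b * a} := by
    intro X Y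
    have h1 : Matrix.trace (X * Y) = ∑ i, ∑ j, X i j * Y j i := by
      simp [Matrix.trace, Matrix.mul_apply, Matrix.diag]
    have h2 : Matrix.trace (Y * X) = ∑ i, ∑ j, Y j i * X i j := by
      have : Matrix.trace (Y * X) = ∑ i, ∑ j, Y i j * X j i := by
        simp [Matrix.trace, Matrix.mul_apply, Matrix.diag]
      rw [this, Finset.sum_comm]
    have h3 : Matrix.trace (X * Y) - Matrix.trace (Y * X)
        = ∑ i, ∑ j, (X i j * Y j i - Y j i * X i j) := by
      rw [h1, h2, ← Finset.sum_sub_distrib]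
      exact Finset.sum_congr rfl fun i _ => by rw [Finset.sum_sub_distrib]
    rw [h3]
    exact AddSubgroup.sum_mem _ fun i _ => AddSubgroup.sum_mem _ fun j _ =>
      AddSubgroup.subset_closure ⟨_, _, rfl⟩
  rw [hfeq, hPeq]
  exact trace_comm u (P * a)
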